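/- Let p ∈ 𝒫^log(Γ) and 0 < w < p_-. Then there exists C > 0 such that for every x ∈ Γ, β > 1 and r > 0: ‖χ_{B(x,βr)}‖_{p(·)} ≤ C·β^{D/w}·‖χ_{B(x,r)}‖_{p(·)}, where D is the exponent fixed in standing hypothesis (a). -/

import Mathlib

open scoped ENNReal NNReal BigOperators
open Filter

namespace VarHardy

variable {Γ : Type*}

/-- The data of a weighted graph as in the paper: a countably infinite vertex set `Γ`,
a nonnegative symmetric weight `nu`, locally finite with uniformly bounded degree,
each vertex having a neighbour, and connectedness. -/
structure GraphData (Γ : Type*) where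
  nu : Γ → Γ → ℝ
  nu_nonneg : ∀ x y, 0 ≤ nu x y
  nu_symm : ∀ x y, nu x y = nu y x
  locFin : ∀ x, {y | 0 < nu x y}.Finite
  deg_pos : ∀ x, {y | 0 < nu x y}.Nonempty
  deg_bdd : ∃ N : ℕ, ∀ x, Nat.card {y // 0 < nu x y} ≤ N
  connected : ∀ x y : Γ, ∃ n : ℕ, ∃ w : ℕ → Γ,
    w 0 = x ∧ w n = y ∧ ∀ i < n, 0 < nu (w i) (w (i + 1))

/-- The weight `μ(x) = Σ_{y} ν(x,y)`. -/
noncomputable def GraphData.mu (G : GraphData Γ) (x : Γ) : ℝ := ∑' y, G.nu x y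

/-- The measure of a set `A ⊆ Γ`, valued in `[0,∞]`. -/
noncomputable def GraphData.muSet (G : GraphData Γ) (A : Set Γ) : ℝ≥0∞ :=
  ∑' x : A, ENNReal.ofReal (G.mu x)

/-- The graph distance: the least length of a path of consecutive neighbours. -/
noncomputable def GraphData.dist (G : GraphData Γ) (x y : Γ) : ℕ :=
  sInf {n : ℕ | ∃ w : ℕ → Γ, w 0 = x ∧ w n = y ∧ ∀ i < n, 0 < G.nu (w i) (w (i + 1))}

/-- The ball `B(x,r) = {y : d(x,y) < r}`. -/
def GraphData.ball (G : GraphData Γ) (x : Γ) (r : ℝ) : Set Γ := {y | (G.dist x y : ℝ) < r}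

/-- The Markov kernel `p(x,y) = ν(x,y)/μ(x)`. -/
noncomputable def GraphData.kernel (G : GraphData Γ) (x y : Γ) : ℝ := G.nu x y / G.mu x

/-- The iterated Markov kernel `p_n`, the kernel of `P^n` (for `n ≥ 1`). -/
noncomputable def GraphData.pn (G : GraphData Γ) : ℕ → Γ → Γ → ℝ
  | 0, x, y => ({x} : Set Γ).indicator 1 y
  | n + 1, x, y => ∑' z, G.kernel x z * G.pn n z y

/-- The Markov operator `P f(x) = Σ_y p(x,y) f(y)`. -/
noncomputable def GraphData.P (G : GraphData Γ) (f : Γ → ℂ) : Γ → ℂ :=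
  fun x => ∑' y, (G.kernel x y : ℂ) * f y

/-- The discrete Laplacian `L = I − P`. -/
noncomputable def GraphData.Lop (G : GraphData Γ) (f : Γ → ℂ) : Γ → ℂ :=
  fun x => f x - G.P f x

/-- The variable exponent quasinorm `‖g‖_{p(·)} ∈ [0,∞]` of an `[0,∞]`-valued function. -/
noncomputable def GraphData.vnorm (G : GraphData Γ) (p : Γ → ℝ) (g : Γ → ℝ≥0∞) : ℝ≥0∞ :=
  sInf {l : ℝ≥0∞ | 0 < l ∧ l ≠ ⊤ ∧ ∑' x, (g x / l) ^ p x * ENNReal.ofReal (G.mu x) ≤ 1}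

/-- The variable exponent quasinorm of a complex function. -/
noncomputable def GraphData.vnormC (G : GraphData Γ) (p : Γ → ℝ) (f : Γ → ℂ) : ℝ≥0∞ :=
  G.vnorm p (fun x => (‖f x‖₊ : ℝ≥0∞))

/-- The `L^q(Γ)` norm (`0<q<∞`) of an `[0,∞]`-valued function. -/
noncomputable def GraphData.lqnormE (G : GraphData Γ) (q : ℝ) (g : Γ → ℝ≥0∞) : ℝ≥0∞ :=
  (∑' x, g x ^ q * ENNReal.ofReal (G.mu x)) ^ (1 / q)

/-- The `L^q(Γ)` norm (`0<q<∞`) of a complex function. -/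
noncomputable def GraphData.lqnorm (G : GraphData Γ) (q : ℝ) (f : Γ → ℂ) : ℝ≥0∞ :=
  G.lqnormE q (fun x => (‖f x‖₊ : ℝ≥0∞))

/-- The `L^q(A)` norm of a complex function on a subset `A ⊆ Γ`. -/
noncomputable def GraphData.lqnormOn (G : GraphData Γ) (q : ℝ) (A : Set Γ) (f : Γ → ℂ) : ℝ≥0∞ :=
  (∑' x : A, (‖f x‖₊ : ℝ≥0∞) ^ q * ENNReal.ofReal (G.mu x)) ^ (1 / q)

/-- The `L^q(Γ)` norm for `q ∈ [1,∞]` (extended real exponent). -/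
noncomputable def GraphData.lqnormTop (G : GraphData Γ) (q : ℝ≥0∞) (f : Γ → ℂ) : ℝ≥0∞ :=
  if q = ⊤ then ⨆ x, (‖f x‖₊ : ℝ≥0∞) else G.lqnorm q.toReal f

/-- The centered Hardy–Littlewood maximal operator. -/
noncomputable def GraphData.maximal (G : GraphData Γ) (f : Γ → ℂ) (x : Γ) : ℝ≥0∞ :=
  ⨆ r : {t : ℝ // 0 < t},
    (∑' y : G.ball x r.1, (‖f y‖₊ : ℝ≥0∞) * ENNReal.ofReal (G.mu y)) / G.muSet (G.ball x r.1)

/-- The radial maximal function `ℳ₊ f(x) = sup_n |P^n f(x)|`. -/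
noncomputable def GraphData.radialMax (G : GraphData Γ) (f : Γ → ℂ) (x : Γ) : ℝ≥0∞ :=
  ⨆ n : ℕ, (‖(G.P)^[n] f x‖₊ : ℝ≥0∞)

/-- The square function `S_L`. -/
noncomputable def GraphData.SL (G : GraphData Γ) (f : Γ → ℂ) (x : Γ) : ℝ≥0∞ :=
  (∑' k : ℕ+, ∑' y : G.ball x ((k : ℕ) : ℝ),
      (‖((k : ℕ) : ℂ) * G.Lop ((G.P)^[(k : ℕ) / 2] f) y‖₊ : ℝ≥0∞) ^ (2 : ℕ) *
        ENNReal.ofReal (G.mu y) /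
        (((k : ℕ) : ℝ≥0∞) * G.muSet (G.ball (y : Γ) ((k : ℕ) : ℝ)))) ^ (1 / 2 : ℝ)

/-- The tent-space operator `𝒜` acting on functions on `Γ × ℕ₊`. -/
noncomputable def GraphData.calA (G : GraphData Γ) (f : Γ → ℕ+ → ℂ) (x : Γ) : ℝ≥0∞ :=
  (∑' k : ℕ+, ∑' y : G.ball x ((k : ℕ) : ℝ),
      (‖f y k‖₊ : ℝ≥0∞) ^ (2 : ℕ) * ENNReal.ofReal (G.mu y) /
        (((k : ℕ) : ℝ≥0∞) * G.muSet (G.ball x ((k : ℕ) : ℝ)))) ^ (1 / 2 : ℝ)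

/-- The Littlewood–Paley square function `G_{L,N}`. -/
noncomputable def GraphData.GLN (G : GraphData Γ) (N : ℕ) (f : Γ → ℂ) (x : Γ) : ℝ≥0∞ :=
  (∑' k : ℕ+, ((k : ℕ) : ℝ≥0∞) ^ (2 * N - 1) *
      (‖(G.Lop)^[N] ((G.P)^[(k : ℕ)] f) x‖₊ : ℝ≥0∞) ^ (2 : ℕ)) ^ (1 / 2 : ℝ)

/-- `p_- = inf p`. -/
noncomputable def pminus (p : Γ → ℝ) : ℝ := ⨅ x, p x

/-- `p_+ = sup p`. -/
noncomputable def pplus (p : Γ → ℝ) : ℝ := ⨆ x, p x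

/-- `𝔭 = min{1, p_-}`. -/
noncomputable def frakp (p : Γ → ℝ) : ℝ := min 1 (pminus p)

/-- `p ∈ 𝒫^log(Γ)`: `p` is positive with `0 < p_- ≤ p_+ < ∞`, and `1/p` is
log-Hölder continuous. -/
def GraphData.LogHolder (G : GraphData Γ) (p : Γ → ℝ) : Prop :=
  (∀ x, 0 < p x) ∧ 0 < pminus p ∧ BddAbove (Set.range p) ∧
  (∃ C > 0, ∀ x y : Γ, x ≠ y →
    |1 / p x - 1 / p y| ≤ C / Real.log (Real.exp 1 + 1 / (G.dist x y : ℝ))) ∧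
  (∃ x₀ : Γ, ∃ a : ℝ, ∃ C > 0, ∀ x : Γ,
    |1 / p x - a| ≤ C / Real.log (Real.exp 1 + (G.dist x x₀ : ℝ)))

/-- The standing hypotheses (a), (b), (c) of the paper, together with finiteness of balls
and `μ(Γ) = ∞`, with doubling dimension `D`. -/
def GraphData.Standing (G : GraphData Γ) (D : ℝ) : Prop :=
  0 < D ∧
  (∃ C > 0, ∀ (x : Γ) (r s : ℝ), 0 < s → s ≤ r →
    G.muSet (G.ball x r) ≤ ENNReal.ofReal (C * (r / s) ^ D) * G.muSet (G.ball x s)) ∧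
  (∃ C > 0, ∃ c > 0, ∀ n : ℕ, 1 ≤ n → ∀ x y : Γ,
    ENNReal.ofReal (G.pn n x y) ≤
      ENNReal.ofReal (C * G.mu y * Real.exp (-c * ((G.dist x y : ℝ)) ^ 2 / n)) /
        G.muSet (G.ball x (Real.sqrt n))) ∧
  (∃ α > 0, (∀ x, 0 < G.nu x x) ∧ ∀ x y, 0 < G.nu x y → α * G.mu x ≤ G.nu x y) ∧
  (∀ (x : Γ) (r : ℝ), (G.ball x r).Finite) ∧
  G.muSet Set.univ = ⊤

/-- The `[0,∞]`-valued indicator function of a set. -/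
noncomputable def indE (B : Set Γ) : Γ → ℝ≥0∞ := B.indicator 1

/-- The quantity `𝒜({λ_j},{B_j})`. -/
noncomputable def GraphData.scrA (G : GraphData Γ) (p : Γ → ℝ) (lam : ℕ → ℂ)
    (B : ℕ → Set Γ) : ℝ≥0∞ :=
  G.vnorm p (fun x =>
    (∑' j : ℕ, (((‖lam j‖₊ : ℝ≥0∞) * indE (B j) x) / G.vnorm p (indE (B j))) ^ frakp p) ^
      (1 / frakp p))

/-- An `(r,p(·),M)`-atom associated with the ball `B(xB,rB)`. -/
def GraphData.IsAtom (G : GraphData Γ) (p : Γ → ℝ) (r : ℝ) (M : ℕ) (a : Γ → ℂ)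
    (xB : Γ) (rB : ℝ) : Prop :=
  1 ≤ rB ∧ ∃ b : Γ → ℂ,
    a = (G.Lop)^[M] b ∧
    (∀ k ≤ M, ∀ x, (G.Lop)^[k] b x ≠ 0 → x ∈ G.ball xB rB) ∧
    (∀ k ≤ M, G.lqnorm r ((G.Lop)^[k] b) ≤
      ENNReal.ofReal (rB ^ (M - k)) * G.muSet (G.ball xB rB) ^ (1 / r) /
        G.vnorm p (indE (G.ball xB rB)))

/-- The annuli `𝔖_j(B)`: `𝔖_0(B) = B` and `𝔖_j(B) = B(x_B,2^{j+1}r_B) ∖ B(x_B,2^{j−1}r_B)`. -/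
def GraphData.annulus (G : GraphData Γ) (xB : Γ) (rB : ℝ) : ℕ → Set Γ
  | 0 => G.ball xB rB
  | j + 1 => G.ball xB (2 ^ (j + 2) * rB) \ G.ball xB (2 ^ j * rB)

/-- A `(q,p(·),M,ε)`-molecule associated with the ball `B(xB,rB)`. -/
def GraphData.IsMolecule (G : GraphData Γ) (p : Γ → ℝ) (q : ℝ) (M : ℕ) (ε : ℝ)
    (m : Γ → ℂ) (xB : Γ) (rB : ℝ) : Prop :=
  1 ≤ rB ∧ ∃ b : Γ → ℂ,
    m = (G.Lop)^[M] b ∧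
    ∀ k ≤ M, ∀ j : ℕ,
      G.lqnormOn q (G.annulus xB rB j) ((G.Lop)^[k] b) ≤
        ENNReal.ofReal (rB ^ (M - k) * 2 ^ (-(j : ℝ) * ε)) *
          G.muSet (G.ball xB (2 ^ j * rB)) ^ (1 / q) /
            G.vnorm p (indE (G.ball xB (2 ^ j * rB)))

/-- A `(T_2^{p(·)},q)`-atom associated with the ball `B(xB,rB)`, `rB ≥ 1`:
supported in the tent `T(B)` and with `‖𝒜a‖_{L^q} ≤ μ(B)^{1/q}‖χ_B‖_{p(·)}^{-1}`. -/
def GraphData.IsTentAtom (G : GraphData Γ) (p : Γ → ℝ) (q : ℝ) (a : Γ → ℕ+ → ℂ)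
    (xB : Γ) (rB : ℝ) : Prop :=
  1 ≤ rB ∧
  (∀ (y : Γ) (k : ℕ+), a y k ≠ 0 → (G.dist xB y : ℝ) ≤ rB - (k : ℕ)) ∧
  G.lqnormE q (G.calA a) ≤ G.muSet (G.ball xB rB) ^ (1 / q) / G.vnorm p (indE (G.ball xB rB))

/-- A `(2,p(·))`-atom (Coifman–Weiss type, with cancellation). -/
def GraphData.IsCWAtom (G : GraphData Γ) (p : Γ → ℝ) (a : Γ → ℂ) (xB : Γ) (rB : ℝ) : Prop :=
  (∀ x, a x ≠ 0 → x ∈ G.ball xB rB) ∧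
  G.lqnorm 2 a ≤ G.muSet (G.ball xB rB) ^ (1 / 2 : ℝ) / G.vnorm p (indE (G.ball xB rB)) ∧
  ∑' x : G.ball xB rB, a x * (G.mu x : ℂ) = 0

/-- `ckc k K = c_{k,K+1}` where `c_{k,1} = 1` and `c_{k,N+1} = Σ_{i=0}^k c_{i,N}`. -/
def ckc : ℕ → ℕ → ℕ
  | _, 0 => 1
  | k, K + 1 => ∑ i ∈ Finset.range (k + 1), ckc i K

/-- The `k`-th term of the series defining `Π_M f`. -/
noncomputable def GraphData.PiMterm (G : GraphData Γ) (M : ℕ) (f : Γ → ℕ+ → ℂ) (k : ℕ)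
    (x : Γ) : ℂ :=
  ((ckc k M : ℂ) / ((k : ℂ) + 1)) *
    (G.Lop)^[M] ((G.P)^[k / 2] (fun y => f y ⟨k + 1, Nat.succ_pos k⟩)) x

/-- The operator `Π_M`. -/
noncomputable def GraphData.PiM (G : GraphData Γ) (M : ℕ) (f : Γ → ℕ+ → ℂ) (x : Γ) : ℂ :=
  ∑' k : ℕ, G.PiMterm M f k x

/-- Muckenhoupt `A_q(Γ)` weights, `1 < q < ∞`. -/
def GraphData.IsAq (G : GraphData Γ) (q : ℝ) (w : Γ → ℝ) : Prop :=
  (∀ x, 0 < w x) ∧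
  ∃ C > 0, ∀ (x : Γ) (r : ℝ), 0 < r →
    ((∑' y : G.ball x r, ENNReal.ofReal (w y * G.mu y)) / G.muSet (G.ball x r)) *
      (((∑' y : G.ball x r, ENNReal.ofReal (w y ^ (1 - q / (q - 1)) * G.mu y)) /
        G.muSet (G.ball x r)) ^ (q - 1)) ≤ ENNReal.ofReal C

/-- The graph gradient `∇h(x) = ((1/2)Σ_y p(x,y)|h(x)−h(y)|²)^{1/2}`. -/
noncomputable def GraphData.grad (G : GraphData Γ) (h : Γ → ℂ) (x : Γ) : ℝ :=
  Real.sqrt ((1 / 2) * ∑' y, G.kernel x y * ‖h x - h y‖ ^ 2)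

/-- The Taylor coefficients `β_k` of `(1−z)^{−1/2}`. -/
noncomputable def rieszBeta (k : ℕ) : ℝ := (Nat.choose (2 * k) k : ℝ) / 4 ^ k

/-! ### Auxiliary lemmas for `lemma_coc_i` -/

section Aux

variable (G : GraphData Γ)

/-- `Reaches G n x y`: there is a path of length `n` from `x` to `y`. -/
def Reaches (G : GraphData Γ) (n : ℕ) (x y : Γ) : Prop :=
  ∃ w : ℕ → Γ, w 0 = x ∧ w n = y ∧ ∀ i < n, 0 < G.nu (w i) (w (i + 1))

lemma distSet_nonempty (x y : Γ) : {n : ℕ | Reaches G n x y}.Nonempty := by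
  obtain ⟨n, hw⟩ := G.connected x y
  exact ⟨n, hw⟩

lemma reaches_dist (x y : Γ) : Reaches G (G.dist x y) x y :=
  Nat.sInf_mem (distSet_nonempty G x y)

lemma dist_le' {G : GraphData Γ} {n : ℕ} {x y : Γ} (h : Reaches G n x y) :
    G.dist x y ≤ n :=
  Nat.sInf_le h

lemma Reaches.symm' {G : GraphData Γ} {n : ℕ} {x y : Γ} (h : Reaches G n x y) :
    Reaches G n y x := by
  obtain ⟨w, h0, hn, hs⟩ := h
  refine ⟨fun i => w (n - i), by simp [hn], by simp [h0], ?_⟩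
  intro i hi
  have h1 : n - i = (n - (i + 1)) + 1 := by omega
  show 0 < G.nu (w (n - i)) (w (n - (i + 1)))
  rw [G.nu_symm, h1]
  exact hs (n - (i + 1)) (by omega)

lemma Reaches.trans' {G : GraphData Γ} {m n : ℕ} {x y z : Γ}
    (h1 : Reaches G m x y) (h2 : Reaches G n y z) : Reaches G (m + n) x z := by
  obtain ⟨u, hu0, hum, hus⟩ := h1
  obtain ⟨v, hv0, hvn, hvs⟩ := h2
  refine ⟨fun i => if i ≤ m then u i else v (i - m), by simp [hu0], ?_, ?_⟩
  · show (if m + n ≤ m then u (m + n) else v (m + n - m)) = z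
    by_cases hn : n = 0
    · subst hn
      simp only [Nat.add_zero, if_pos le_rfl, hum]
      rw [← hv0, hvn]
    · rw [if_neg (by omega), show m + n - m = n by omega, hvn]
  · intro i hi
    show 0 < G.nu (if i ≤ m then u i else v (i - m))
        (if i + 1 ≤ m then u (i + 1) else v (i + 1 - m))
    by_cases him : i + 1 ≤ m
    · rw [if_pos (by omega), if_pos him]
      exact hus i (by omega)
    · by_cases him' : i ≤ m
      · have : i = m := by omega
        subst this
        rw [if_pos le_rfl, if_neg him, hum, show i + 1 - i = 1 by omega, ← hv0]
        exact hvs 0 (by omega)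
      · rw [if_neg him', if_neg him, show i + 1 - m = (i - m) + 1 by omega]
        exact hvs (i - m) (by omega)

lemma dist_triangle' (x y z : Γ) : G.dist x z ≤ G.dist x y + G.dist y z :=
  dist_le' ((reaches_dist G x y).trans' (reaches_dist G y z))

lemma dist_comm' (x y : Γ) : G.dist x y = G.dist y x :=
  le_antisymm (dist_le' (reaches_dist G y x).symm') (dist_le' (reaches_dist G x y).symm')

lemma dist_self' (x : Γ) : G.dist x x = 0 :=
  Nat.le_zero.mp (dist_le' ⟨fun _ => x, rfl, rfl, fun i hi => (Nat.not_lt_zero i hi).elim⟩)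

lemma eq_of_dist_eq_zero' {G : GraphData Γ} {x y : Γ} (h : G.dist x y = 0) : x = y := by
  obtain ⟨w, h0, hn, -⟩ := reaches_dist G x y
  rw [h] at hn
  rw [← h0, hn]

lemma mem_ball' {G : GraphData Γ} {x y : Γ} {r : ℝ} :
    y ∈ G.ball x r ↔ ((G.dist x y : ℝ) < r) := Iff.rfl

lemma self_mem_ball {x : Γ} {r : ℝ} (hr : 0 < r) : x ∈ G.ball x r := by
  rw [mem_ball', dist_self']
  simpa using hr

lemma ball_mono {r r' : ℝ} (h : r ≤ r') (x : Γ) : G.ball x r ⊆ G.ball x r' :=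
  fun _ hy => lt_of_lt_of_le hy h

lemma ball_subset_ball_of_dist {x z : Γ} {r : ℝ} :
    G.ball x r ⊆ G.ball z ((G.dist z x : ℝ) + r) := by
  intro y hy
  rw [mem_ball'] at hy ⊢
  have h := dist_triangle' G z x y
  have : (G.dist z y : ℝ) ≤ (G.dist z x : ℝ) + (G.dist x y : ℝ) := by exact_mod_cast h
  linarith

lemma ball_one_eq (x : Γ) : G.ball x 1 = {x} := by
  ext y
  simp only [mem_ball', Set.mem_singleton_iff]
  constructor
  · intro h
    have : G.dist x y = 0 := by exact_mod_cast Nat.lt_one_iff.mp (by exact_mod_cast h)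
    exact (eq_of_dist_eq_zero' this).symm
  · rintro rfl
    rw [dist_self']
    norm_num

/-- Points far from `x₀` exist. -/
lemma exists_far [Infinite Γ] (hfin : ∀ (x : Γ) (r : ℝ), (G.ball x r).Finite)
    (x₀ : Γ) (R : ℝ) : ∃ u : Γ, R ≤ (G.dist u x₀ : ℝ) := by
  obtain ⟨u, hu⟩ := (hfin x₀ (R + 1)).infinite_compl.nonempty
  refine ⟨u, ?_⟩
  rw [Set.mem_compl_iff, mem_ball', not_lt, dist_comm'] at hu
  linarith

end Aux

section Aux2

variable (G : GraphData Γ)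

lemma nu_summable (x : Γ) : Summable (fun y => G.nu x y) := by
  apply summable_of_ne_finset_zero (s := (G.locFin x).toFinset)
  intro y hy
  have : ¬ 0 < G.nu x y := by simpa using hy
  have h2 := G.nu_nonneg x y
  linarith

lemma mu_nonneg (x : Γ) : 0 ≤ G.mu x := tsum_nonneg (fun y => G.nu_nonneg x y)

lemma mu_pos (x : Γ) : 0 < G.mu x := by
  obtain ⟨y, hy⟩ := G.deg_pos x
  exact lt_of_lt_of_le hy (Summable.le_tsum (nu_summable G x) y (fun z _ => G.nu_nonneg x z))

lemma muSet_eq {A : Set Γ} (hA : A.Finite) :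
    G.muSet A = ENNReal.ofReal (∑ y ∈ hA.toFinset, G.mu y) := by
  rw [GraphData.muSet, tsum_subtype A (fun z => ENNReal.ofReal (G.mu z))]
  rw [tsum_eq_sum (s := hA.toFinset)
    (fun z hz => Set.indicator_of_notMem (by simpa using hz) _)]
  rw [ENNReal.ofReal_sum_of_nonneg (fun y _ => mu_nonneg G y)]
  exact Finset.sum_congr rfl
    (fun y hy => Set.indicator_of_mem (hA.mem_toFinset.mp hy) _)

lemma rpow_bounds {t u K : ℝ} (ht : 0 < t) (h : |u| * |Real.log t| ≤ K) :
    Real.exp (-K) ≤ t ^ u ∧ t ^ u ≤ Real.exp K := by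
  rw [Real.rpow_def_of_pos ht]
  have habs : |Real.log t * u| ≤ K := by rw [abs_mul, mul_comm |Real.log t|]; exact h
  obtain ⟨h1, h2⟩ := abs_le.mp habs
  exact ⟨Real.exp_le_exp.mpr h1, Real.exp_le_exp.mpr h2⟩

lemma one_le_log_add {t : ℝ} (ht : 0 ≤ t) : 1 ≤ Real.log (Real.exp 1 + t) := by
  calc (1 : ℝ) = Real.log (Real.exp 1) := (Real.log_exp 1).symm
  _ ≤ _ := Real.log_le_log (Real.exp_pos 1) (by linarith)

lemma exists_mul_sum_le {s : Finset Γ} {f g : Γ → ℝ} (hg : ∀ y ∈ s, 0 ≤ g y)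
    (hpos : 0 < ∑ y ∈ s, g y) (hf : ∑ y ∈ s, f y * g y ≤ 1) :
    ∃ z ∈ s, f z * ∑ y ∈ s, g y ≤ 1 := by
  have hne : s.Nonempty := by
    rcases Finset.eq_empty_or_nonempty s with h | h
    · rw [h] at hpos; simp at hpos
    · exact h
  obtain ⟨z, hz, hmin⟩ := Finset.exists_min_image s f hne
  refine ⟨z, hz, ?_⟩
  calc f z * ∑ y ∈ s, g y = ∑ y ∈ s, f z * g y := by rw [Finset.mul_sum]
  _ ≤ ∑ y ∈ s, f y * g y :=
    Finset.sum_le_sum (fun y hy => mul_le_mul_of_nonneg_right (hmin y hy) (hg y hy))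
  _ ≤ 1 := hf

lemma modular_eq (p : Γ → ℝ) (hp : ∀ z, 0 < p z) {B : Set Γ} (hB : B.Finite)
    {t : ℝ} (ht : 0 < t) :
    ∑' z, (indE B z / ENNReal.ofReal t) ^ p z * ENNReal.ofReal (G.mu z)
      = ENNReal.ofReal (∑ z ∈ hB.toFinset, t⁻¹ ^ p z * G.mu z) := by
  have hout : ∀ z ∉ hB.toFinset,
      (indE B z / ENNReal.ofReal t) ^ p z * ENNReal.ofReal (G.mu z) = 0 := by
    intro z hz
    rw [indE, Set.indicator_of_notMem (by simpa using hz)]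
    rw [ENNReal.zero_div, ENNReal.zero_rpow_of_pos (hp z), zero_mul]
  rw [tsum_eq_sum hout]
  refine (Finset.sum_congr rfl ?_).trans
    (ENNReal.ofReal_sum_of_nonneg (fun z _ => mul_nonneg
      (Real.rpow_nonneg (inv_nonneg.mpr ht.le) _) (mu_nonneg G z))).symm
  intro z hz
  have hzB : z ∈ B := hB.mem_toFinset.mp hz
  rw [indE, Set.indicator_of_mem hzB]
  simp only [Pi.one_apply]
  rw [show (1 : ℝ≥0∞) / ENNReal.ofReal t = ENNReal.ofReal t⁻¹ by
    rw [← ENNReal.ofReal_one, ← ENNReal.ofReal_div_of_pos ht, one_div]]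
  rw [ENNReal.ofReal_rpow_of_pos (inv_pos.mpr ht)]
  rw [← ENNReal.ofReal_mul (Real.rpow_nonneg (inv_nonneg.mpr ht.le) _)]

lemma vnorm_le_char (p : Γ → ℝ) (hp : ∀ z, 0 < p z) {B : Set Γ} (hB : B.Finite)
    {t : ℝ} (ht : 0 < t)
    (h1 : ∑ z ∈ hB.toFinset, t⁻¹ ^ p z * G.mu z ≤ 1) :
    G.vnorm p (indE B) ≤ ENNReal.ofReal t := by
  apply sInf_le
  refine ⟨ENNReal.ofReal_pos.mpr ht, ENNReal.ofReal_ne_top, ?_⟩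
  rw [modular_eq G p hp hB ht]
  exact ENNReal.ofReal_le_one.mpr h1

lemma le_vnorm_char (p : Γ → ℝ) (hp : ∀ z, 0 < p z) {B : Set Γ} (hB : B.Finite) {c : ℝ}
    (h : ∀ t : ℝ, 0 < t → ∑ z ∈ hB.toFinset, t⁻¹ ^ p z * G.mu z ≤ 1 → c ≤ t) :
    ENNReal.ofReal c ≤ G.vnorm p (indE B) := by
  apply le_sInf
  rintro l ⟨hl0, hlt, hm⟩
  have ht : 0 < l.toReal := ENNReal.toReal_pos hl0.ne' hlt
  have hl : l = ENNReal.ofReal l.toReal := (ENNReal.ofReal_toReal hlt).symm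
  rw [hl, modular_eq G p hp hB ht] at hm
  rw [hl]
  exact ENNReal.ofReal_le_ofReal (h _ ht (ENNReal.ofReal_le_one.mp hm))

end Aux2

set_option maxHeartbeats 4000000 in
/-- Growth of `‖χ_B‖_{p(·)}` under dilation of balls. -/
theorem lemma_coc_i {Γ : Type*} [Countable Γ] [Infinite Γ] (G : GraphData Γ) (D : ℝ)
    (hG : G.Standing D) (p : Γ → ℝ) (hp : G.LogHolder p)
    (w : ℝ) (hw0 : 0 < w) (hw : w < pminus p) :
    ∃ C > (0 : ℝ), ∀ (x : Γ) (β r : ℝ), 1 < β → 0 < r →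
      G.vnorm p (indE (G.ball x (β * r))) ≤
        ENNReal.ofReal (C * β ^ (D / w)) * G.vnorm p (indE (G.ball x r)) := by
  classical
  obtain ⟨hD, ⟨CD0, hCD0, hdbl0⟩, -, -, hfin, -⟩ := hG
  obtain ⟨hppos, hpm, hbdd, -, x₀, a, Ci, hCi, hdec⟩ := hp
  -- basic exponent bounds
  set pm : ℝ := pminus p with hpmdef
  have hple : ∀ x, pm ≤ p x := fun x => by
    exact ciInf_le ⟨0, by rintro v ⟨u, rfl⟩; exact (hppos u).le⟩ x
  obtain ⟨P0, hP0⟩ := hbdd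
  set pP : ℝ := max P0 1 with hpPdef
  have hpleP : ∀ x, p x ≤ pP := fun x =>
    le_trans (hP0 (Set.mem_range_self x)) (le_max_left _ _)
  have h1P : (1 : ℝ) ≤ pP := le_max_right _ _
  have hpppos : (0:ℝ) < pP := lt_of_lt_of_le one_pos h1P
  -- e and logs
  set e : ℝ := Real.exp 1 with hedef
  have he2 : (2:ℝ) ≤ e := by
    have := Real.add_one_le_exp 1; linarith
  have he1 : (1:ℝ) < e := by linarith
  have hlog1 : ∀ t : ℝ, 0 ≤ t → 1 ≤ Real.log (e + t) := fun t ht => one_le_log_add ht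
  -- the distance function to x₀
  set dd : Γ → ℝ := fun u => (G.dist u x₀ : ℝ) with hdddef
  have hddnn : ∀ u, 0 ≤ dd u := fun u => Nat.cast_nonneg _
  have hdec' : ∀ u, |1 / p u - a| ≤ Ci / Real.log (e + dd u) := hdec
  -- bounds on a
  have hfar' : ∀ R : ℝ, ∃ u : Γ, R ≤ dd u := fun R => exists_far G hfin x₀ R
  have hCilog : ∀ δ : ℝ, 0 < δ → ∃ u : Γ, Ci / Real.log (e + dd u) ≤ δ := by
    intro δ hδ
    obtain ⟨u, hu⟩ := hfar' (Real.exp (Ci / δ))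
    refine ⟨u, ?_⟩
    have hL : Ci / δ ≤ Real.log (e + dd u) := by
      calc Ci / δ = Real.log (Real.exp (Ci / δ)) := (Real.log_exp _).symm
      _ ≤ Real.log (e + dd u) :=
        Real.log_le_log (Real.exp_pos _) (by have := (hddnn u); have he0 := (Real.exp_pos 1).le; linarith)
    calc Ci / Real.log (e + dd u) ≤ Ci / (Ci / δ) := by
          apply div_le_div_of_nonneg_left hCi.le (by positivity) hL
    _ = δ := by field_simp
  have ha_le : a ≤ 1 / pm := by
    apply le_of_forall_pos_le_add
    intro δ hδ
    obtain ⟨u, hu⟩ := hCilog δ hδ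
    have h1 := hdec' u
    have h2 : 1 / p u ≤ 1 / pm := one_div_le_one_div_of_le hpm (hple u)
    have := abs_le.mp h1
    linarith
  have ha_pos : 0 < a := by
    obtain ⟨u, hu⟩ := hCilog (1 / (2 * pP)) (by positivity)
    have h1 := hdec' u
    have h2 : 1 / pP ≤ 1 / p u := one_div_le_one_div_of_le (hppos u) (hpleP u)
    have := abs_le.mp h1
    have : 1 / pP - 1 / (2 * pP) ≤ a := by linarith
    have hhalf : 1 / pP - 1 / (2 * pP) = 1 / (2 * pP) := by field_simp; ring
    rw [hhalf] at this
    exact lt_of_lt_of_le (by positivity) this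
  have hapm : a * pm ≤ 1 := by
    calc a * pm ≤ (1 / pm) * pm := mul_le_mul_of_nonneg_right ha_le hpm.le
    _ = 1 := by field_simp
  -- measure of balls, as real numbers
  set mB : Γ → ℝ → ℝ := fun x r => ∑ y ∈ (hfin x r).toFinset, G.mu y with hmBdef
  have hmBnn : ∀ x r, 0 ≤ mB x r := fun x r =>
    Finset.sum_nonneg (fun y _ => mu_nonneg G y)
  have hmem : ∀ {x r y}, y ∈ (hfin x r).toFinset ↔ y ∈ G.ball x r := by
    intro x r y; exact (hfin x r).mem_toFinset
  have hmu_le : ∀ {x r y}, y ∈ G.ball x r → G.mu y ≤ mB x r := by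
    intro x r y hy
    exact Finset.single_le_sum (fun z _ => mu_nonneg G z) (hmem.mpr hy)
  have hmBpos : ∀ x r, 0 < r → 0 < mB x r := fun x r hr =>
    lt_of_lt_of_le (mu_pos G x) (hmu_le (self_mem_ball G hr))
  have hsub : ∀ {x r z s}, G.ball x r ⊆ G.ball z s → mB x r ≤ mB z s := by
    intro x r z s hss
    apply Finset.sum_le_sum_of_subset_of_nonneg
    · exact Set.Finite.toFinset_subset_toFinset.mpr hss
    · exact fun y _ _ => mu_nonneg G y
  have hmu1 : ∀ x, mB x 1 = G.mu x := by
    intro x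
    have : (hfin x 1).toFinset = {x} := by
      ext y; simp [hmem, ball_one_eq]
    rw [hmBdef]; simp only []
    rw [this, Finset.sum_singleton]
  -- real doubling
  set CD : ℝ := max CD0 1 with hCDdef
  have hCD1 : (1:ℝ) ≤ CD := le_max_right _ _
  have hCDpos : (0:ℝ) < CD := lt_of_lt_of_le one_pos hCD1
  have hdblR : ∀ (x : Γ) (r s : ℝ), 0 < s → s ≤ r → mB x r ≤ CD * (r / s) ^ D * mB x s := by
    intro x r s hs hsr
    have hrs : (0:ℝ) < r / s := div_pos (lt_of_lt_of_le hs hsr) hs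
    have hpow : (0:ℝ) ≤ (r / s) ^ D := Real.rpow_nonneg hrs.le D
    have hcd : (0:ℝ) ≤ CD0 * (r / s) ^ D := mul_nonneg hCD0.le hpow
    have h1 := hdbl0 x r s hs hsr
    rw [muSet_eq G (hfin x r), muSet_eq G (hfin x s),
      ← ENNReal.ofReal_mul hcd] at h1
    have h2 : mB x r ≤ CD0 * (r / s) ^ D * mB x s :=
      (ENNReal.ofReal_le_ofReal_iff (mul_nonneg hcd (hmBnn x s))).mp h1
    have h3 : CD0 ≤ CD := le_max_left _ _
    calc mB x r ≤ CD0 * (r / s) ^ D * mB x s := h2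
    _ ≤ CD * (r / s) ^ D * mB x s :=
        mul_le_mul_of_nonneg_right (mul_le_mul_of_nonneg_right h3 hpow) (hmBnn x s)
  set μ₀ : ℝ := G.mu x₀ with hμ₀def
  have hμ₀ : 0 < μ₀ := mu_pos G x₀
  -- polynomial upper/lower bounds for measures
  have hP1 : ∀ (x : Γ) (r : ℝ), 0 < r → mB x r ≤ CD * (1 + dd x + r) ^ D * μ₀ := by
    intro x r hr
    have hcomm : (G.dist x₀ x : ℝ) = dd x := by
      show ((G.dist x₀ x : ℕ) : ℝ) = ((G.dist x x₀ : ℕ) : ℝ)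
      rw [dist_comm']
    have hb1 : G.ball x r ⊆ G.ball x₀ (1 + dd x + r) := by
      refine Set.Subset.trans (ball_subset_ball_of_dist G) (ball_mono G ?_ x₀)
      rw [hcomm]; linarith
    calc mB x r ≤ mB x₀ (1 + dd x + r) := hsub hb1
    _ ≤ CD * ((1 + dd x + r) / 1) ^ D * mB x₀ 1 :=
        hdblR x₀ _ 1 one_pos (by have := hddnn x; linarith)
    _ = CD * (1 + dd x + r) ^ D * μ₀ := by rw [div_one, hmu1 x₀]
  have hP2 : ∀ x : Γ, μ₀ ≤ CD * (1 + dd x) ^ D * G.mu x := by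
    intro x
    have hx₀ : x₀ ∈ G.ball x (1 + dd x) := by
      show (G.dist x x₀ : ℝ) < 1 + dd x
      have : (G.dist x x₀ : ℝ) = dd x := rfl
      rw [this]; linarith [hddnn x]
    calc μ₀ ≤ mB x (1 + dd x) := hmu_le hx₀
    _ ≤ CD * ((1 + dd x) / 1) ^ D * mB x 1 :=
        hdblR x _ 1 one_pos (by linarith [hddnn x])
    _ = CD * (1 + dd x) ^ D * G.mu x := by rw [div_one, hmu1 x]
  -- log bound in the small regime
  set cL : ℝ := |Real.log (CD * μ₀)| + |Real.log (CD / μ₀)| + 2 * D with hcLdef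
  have hcLnn : 0 ≤ cL := by positivity
  have hS1 : ∀ (x : Γ) (r : ℝ), 0 < r → 2 * r ≤ dd x →
      |Real.log (mB x r)| ≤ cL * Real.log (e + dd x) := by
    intro x r hr h2r
    have hL1 : 1 ≤ Real.log (e + dd x) := hlog1 _ (hddnn x)
    set L := Real.log (e + dd x) with hLdef
    have hm := hmBpos x r hr
    have hup : Real.log (mB x r) ≤ cL * L := by
      have h1 : mB x r ≤ CD * (1 + dd x + r) ^ D * μ₀ := hP1 x r hr
      have h2 : Real.log (mB x r) ≤ Real.log (CD * (1 + dd x + r) ^ D * μ₀) :=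
        Real.log_le_log hm h1
      have h3 : Real.log (CD * (1 + dd x + r) ^ D * μ₀)
          = Real.log (CD * μ₀) + D * Real.log (1 + dd x + r) := by
        rw [Real.log_mul (by positivity) hμ₀.ne', Real.log_mul hCDpos.ne' (by positivity),
          Real.log_rpow (by positivity), Real.log_mul hCDpos.ne' hμ₀.ne']
        ring
      have h4 : Real.log (1 + dd x + r) ≤ 2 * L := by
        have hsq : 1 + dd x + r ≤ (e + dd x) ^ 2 := by nlinarith [hddnn x, he2]
        calc Real.log (1 + dd x + r) ≤ Real.log ((e + dd x) ^ 2) :=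
            Real.log_le_log (by positivity) hsq
        _ = 2 * L := by rw [Real.log_pow]; push_cast; ring
      rw [h3] at h2
      have h6 : D * Real.log (1 + dd x + r) ≤ D * (2 * L) :=
        mul_le_mul_of_nonneg_left h4 hD.le
      have h7 : Real.log (CD * μ₀) ≤ |Real.log (CD * μ₀)| * L :=
        (le_abs_self _).trans (le_mul_of_one_le_right (abs_nonneg _) hL1)
      rw [hcLdef]
      have hLnn : (0:ℝ) ≤ L := by linarith
      linarith [mul_nonneg (abs_nonneg (Real.log (CD / μ₀))) hLnn, h6, h7]
    have hlow : -(cL * L) ≤ Real.log (mB x r) := by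
      have h1 : μ₀ / (CD * (1 + dd x) ^ D) ≤ mB x r := by
        have h0 := hP2 x
        have hmu : G.mu x ≤ mB x r := hmu_le (self_mem_ball G hr)
        rw [div_le_iff₀ (by positivity)]
        have hnn : (0:ℝ) ≤ CD * (1 + dd x) ^ D := by positivity
        calc μ₀ ≤ CD * (1 + dd x) ^ D * G.mu x := h0
        _ ≤ CD * (1 + dd x) ^ D * mB x r := mul_le_mul_of_nonneg_left hmu hnn
        _ = mB x r * (CD * (1 + dd x) ^ D) := mul_comm _ _
      have h2 : Real.log (μ₀ / (CD * (1 + dd x) ^ D)) ≤ Real.log (mB x r) :=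
        Real.log_le_log (by positivity) h1
      have h3 : Real.log (μ₀ / (CD * (1 + dd x) ^ D))
          = -Real.log (CD / μ₀) - D * Real.log (1 + dd x) := by
        rw [Real.log_div hμ₀.ne' (by positivity), Real.log_mul hCDpos.ne' (by positivity),
          Real.log_rpow (by positivity), Real.log_div hCDpos.ne' hμ₀.ne']
        ring
      have h4 : Real.log (1 + dd x) ≤ L := by
        apply Real.log_le_log (by positivity)
        linarith
      rw [h3] at h2
      have hLnn : (0:ℝ) ≤ L := by linarith
      have h6 : D * Real.log (1 + dd x) ≤ D * L := mul_le_mul_of_nonneg_left h4 hD.le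
      have h7 : Real.log (CD / μ₀) ≤ |Real.log (CD / μ₀)| * L :=
        (le_abs_self _).trans (le_mul_of_one_le_right (abs_nonneg _) hL1)
      rw [hcLdef]
      linarith [mul_nonneg (abs_nonneg (Real.log (CD * μ₀))) hLnn, h6, h7,
        mul_nonneg hD.le hLnn]
    exact abs_le.mpr ⟨hlow, hup⟩
  have hS2 : ∀ (x : Γ) (r : ℝ) (y : Γ), 0 < r → 2 * r ≤ dd x → y ∈ G.ball x r →
      |1 / p y - 1 / p x| ≤ 3 * Ci / Real.log (e + dd x) := by
    intro x r y hr h2r hy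
    have hL1 : 1 ≤ Real.log (e + dd x) := hlog1 _ (hddnn x)
    have hLy : 1 ≤ Real.log (e + dd y) := hlog1 _ (hddnn y)
    have hdy2 : dd x / 2 ≤ dd y := by
      have ht := dist_triangle' G x y x₀
      have hc : (G.dist x y : ℝ) < r := hy
      have h2 : (G.dist x x₀ : ℝ) ≤ (G.dist x y : ℝ) + (G.dist y x₀ : ℝ) := by
        exact_mod_cast ht
      have he3 : (G.dist x x₀ : ℝ) = dd x := rfl
      have he4 : (G.dist y x₀ : ℝ) = dd y := rfl
      rw [he3, he4] at h2
      linarith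
    have hlog2 : Real.log (e + dd x) ≤ 2 * Real.log (e + dd y) := by
      have hsq : e + dd x ≤ (e + dd y) ^ 2 := by nlinarith [hddnn y, he2, hddnn x]
      calc Real.log (e + dd x) ≤ Real.log ((e + dd y) ^ 2) :=
          Real.log_le_log (by positivity) hsq
      _ = 2 * Real.log (e + dd y) := by rw [Real.log_pow]; push_cast; ring
    have h1 := hdec' y
    have h2 := hdec' x
    have hq : Ci / Real.log (e + dd y) ≤ 2 * Ci / Real.log (e + dd x) := by
      rw [div_le_div_iff₀ (by linarith) (by linarith)]
      nlinarith [hCi.le]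
    have h2' : |a - 1 / p x| = |1 / p x - a| := abs_sub_comm _ _
    calc |1 / p y - 1 / p x| ≤ |1 / p y - a| + |a - 1 / p x| := abs_sub_le _ a _
    _ ≤ 2 * Ci / Real.log (e + dd x) + Ci / Real.log (e + dd x) := by
        rw [h2']
        exact add_le_add (h1.trans hq) h2
    _ = 3 * Ci / Real.log (e + dd x) := by ring
  -- small-regime error bound
  set K2 : ℝ := 4 * (1 + pP) * Ci * cL with hK2def
  have hK2nn : 0 ≤ K2 := by positivity
  set E2 : ℝ := Real.exp K2 with hE2def
  have hE2one : (1:ℝ) ≤ E2 := Real.one_le_exp hK2nn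
  have hE2pos : (0:ℝ) < E2 := lt_of_lt_of_le one_pos hE2one
  have hE2 : ∀ (x : Γ) (r : ℝ), 0 < r → 2 * r ≤ dd x → ∀ u : ℝ,
      |u| ≤ (1 + pP) * (3 * Ci / Real.log (e + dd x)) →
      E2⁻¹ ≤ mB x r ^ u ∧ mB x r ^ u ≤ E2 := by
    intro x r hr h2r u hu
    have hm := hmBpos x r hr
    have hL1 : 1 ≤ Real.log (e + dd x) := hlog1 _ (hddnn x)
    have hLne : Real.log (e + dd x) ≠ 0 := by linarith
    have hS := hS1 x r hr h2r
    have hK : |u| * |Real.log (mB x r)| ≤ K2 := by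
      have h1 : |u| * |Real.log (mB x r)| ≤
          ((1 + pP) * (3 * Ci / Real.log (e + dd x))) * (cL * Real.log (e + dd x)) :=
        mul_le_mul hu hS (abs_nonneg _) (by positivity)
      have h2 : ((1 + pP) * (3 * Ci / Real.log (e + dd x))) * (cL * Real.log (e + dd x))
          = 3 * (1 + pP) * Ci * cL := by
        field_simp
      rw [h2] at h1
      rw [hK2def]
      nlinarith [hCi.le, hcLnn, hpppos, mul_nonneg (mul_nonneg (by linarith [hpppos] : (0:ℝ) ≤ 1 + pP) hCi.le) hcLnn]
    have hb := rpow_bounds hm hK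
    refine ⟨?_, hb.2⟩
    rw [hE2def, ← Real.exp_neg]
    exact hb.1
  -- large regime constants
  set m₀ : ℝ := μ₀ / (CD * 3 ^ (D:ℝ)) with hm₀def
  have hm₀pos : 0 < m₀ := by positivity
  set m0' : ℝ := min m₀ 1 with hm0'def
  have hm0'pos : 0 < m0' := lt_min hm₀pos one_pos
  have hm0'le1 : m0' ≤ 1 := min_le_right _ _
  have hm₀le : ∀ (x : Γ) (r : ℝ), 0 < r → dd x < 2 * r → m0' ≤ mB x r := by
    intro x r hr hlarge
    have hb : G.ball x₀ r ⊆ G.ball x (3 * r) := by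
      intro y hy
      have ht := dist_triangle' G x x₀ y
      have h1 : (G.dist x₀ y : ℝ) < r := hy
      have h2 : (G.dist x y : ℝ) ≤ (G.dist x x₀ : ℝ) + (G.dist x₀ y : ℝ) := by
        exact_mod_cast ht
      have he3 : (G.dist x x₀ : ℝ) = dd x := rfl
      rw [he3] at h2
      show (G.dist x y : ℝ) < 3 * r
      linarith only [h1, h2, hlarge]
    have h1 : μ₀ ≤ mB x₀ r := hmu_le (self_mem_ball G hr)
    have h2 : mB x₀ r ≤ mB x (3 * r) := hsub hb
    have h3 : mB x (3 * r) ≤ CD * ((3 * r) / r) ^ D * mB x r := hdblR x (3 * r) r hr (by linarith only [hr])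
    have h4 : (3 * r) / r = (3:ℝ) := by field_simp
    rw [h4] at h3
    have h5 : m₀ ≤ mB x r := by
      rw [hm₀def, div_le_iff₀ (by positivity)]
      linarith only [h1, h2, h3]
    exact le_trans (min_le_left _ _) h5
  set ε : ℝ := a * pm / (2 * D) with hεdef
  have hεpos : 0 < ε := by positivity
  have hεD : ε * D = a * pm / 2 := by
    rw [hεdef]; field_simp
  set E3 : ℝ := Real.exp (pP * Ci / ε * (|Real.log m0'| + 1)) with hE3def
  have hE3pos : 0 < E3 := Real.exp_pos _
  set E4 : ℝ := CD * μ₀ * e * (1 + m0' ^ (-(a * pm))) with hE4def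
  have hE4pos : 0 < E4 := by positivity
  set AU : ℝ := max (max 1 (m0' ^ (-a))) (max (E2 ^ (1 / pm)) ((E3 + E4) ^ (1 / pm)))
    with hAUdef
  have hAU1 : (1:ℝ) ≤ AU := le_trans (le_max_left 1 _) (le_max_left _ _)
  have hAUpos : (0:ℝ) < AU := lt_of_lt_of_le one_pos hAU1
  set M₀ : ℝ := max e ((max 1 (2 * CD * μ₀)) ^ 2) with hM₀def
  have hM₀e : e ≤ M₀ := le_max_left _ _
  have hM₀pos : (0:ℝ) < M₀ := by positivity
  set c7 : ℝ := m0' ^ (1 / pm) with hc7def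
  have hc7pos : 0 < c7 := Real.rpow_pos_of_pos hm0'pos _
  have hc7le1 : c7 ≤ 1 := Real.rpow_le_one hm0'pos.le hm0'le1 (by positivity)
  set c8 : ℝ := min (c7 * M₀ ^ (-a)) ((2:ℝ) ^ (-a) * Real.exp (-(Ci / ε))) with hc8def
  have hc8pos : 0 < c8 := by
    apply lt_min
    · positivity
    · positivity
  set AL : ℝ := max E2 (1 / c8) with hALdef
  have hALpos : (0:ℝ) < AL := lt_of_lt_of_le hE2pos (le_max_left _ _)
  have hALc8 : 1 / AL ≤ c8 := by
    rw [div_le_iff₀ hALpos]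
    rw [← div_le_iff₀' hc8pos]
    exact le_max_right _ _
  set E5 : ℝ := CD ^ (1 / pm) * E2 with hE5def
  have hE5pos : 0 < E5 := by positivity
  -- the reference exponent
  set sE : Γ → ℝ → ℝ := fun x r => if 2 * r ≤ dd x then 1 / p x else a with hsEdef
  have hsEpos : ∀ x r, 0 < sE x r := by
    intro x r
    rw [hsEdef]; simp only []
    split
    · exact one_div_pos.mpr (hppos x)
    · exact ha_pos
  have hsEle : ∀ x r, sE x r ≤ 1 / pm := by
    intro x r
    rw [hsEdef]; simp only []
    split
    · exact one_div_le_one_div_of_le hpm (hple x)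
    · exact ha_le
  -- upper bound for the norm
  have HU : ∀ (x : Γ) (r : ℝ), 0 < r →
      G.vnorm p (indE (G.ball x r)) ≤ ENNReal.ofReal (AU * mB x r ^ sE x r) := by
    intro x r hr
    have hm := hmBpos x r hr
    have hmnn := hmBnn x r
    set s := sE x r with hsdef
    have hspos : 0 < s := hsEpos x r
    have ht : (0:ℝ) < AU * mB x r ^ s := by positivity
    apply vnorm_le_char G p hppos (hfin x r) ht
    have hterm : ∀ z : Γ, ((AU * mB x r ^ s)⁻¹) ^ p z
        = (AU ^ p z)⁻¹ * mB x r ^ (1 - s * p z) * (mB x r)⁻¹ := by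
      intro z
      rw [mul_inv,
        Real.mul_rpow (inv_nonneg.mpr hAUpos.le)
          (inv_nonneg.mpr (Real.rpow_nonneg hmnn s)),
        Real.inv_rpow hAUpos.le, Real.inv_rpow (Real.rpow_nonneg hmnn s),
        ← Real.rpow_mul hmnn, ← Real.rpow_neg hmnn,
        show -(s * p z) = (1 - s * p z) + (-1) by ring,
        Real.rpow_add hm, Real.rpow_neg_one, mul_assoc]
    have hAUpow : ∀ z : Γ, ∀ X : ℝ, 0 < X → X ^ (1/pm) ≤ AU → X ≤ AU ^ p z := by
      intro z X hX hXA
      have i1 : X = (X ^ (1/pm)) ^ pm := by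
        rw [← Real.rpow_mul hX.le, one_div, inv_mul_cancel₀ hpm.ne', Real.rpow_one]
      have i2 : (X ^ (1/pm)) ^ pm ≤ AU ^ pm :=
        Real.rpow_le_rpow (Real.rpow_nonneg hX.le _) hXA hpm.le
      have i3 : AU ^ pm ≤ AU ^ p z := Real.rpow_le_rpow_of_exponent_le hAU1 (hple z)
      rw [i1]; exact i2.trans i3
    by_cases hc : 2 * r ≤ dd x
    · -- small regime
      have hsval : s = 1 / p x := by rw [hsdef, hsEdef]; simp only [if_pos hc]
      have hbound : ∀ z ∈ (hfin x r).toFinset,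
          ((AU * mB x r ^ s)⁻¹) ^ p z * G.mu z ≤ (mB x r)⁻¹ * G.mu z := by
        intro z hzf
        have hz : z ∈ G.ball x r := hmem.mp hzf
        have e1 : 1 - s * p z = p z * (1 / p z - 1 / p x) := by
          rw [hsval]
          first
          | (field_simp [((hppos z).ne')]; ring)
          | field_simp [((hppos z).ne')]
        have e2 : |1 - s * p z| ≤ (1 + pP) * (3 * Ci / Real.log (e + dd x)) := by
          rw [e1, abs_mul, abs_of_pos (hppos z)]
          have hb1 := hS2 x r z hr hc hz
          have h3 : (0:ℝ) ≤ 3 * Ci / Real.log (e + dd x) := by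
            have := hlog1 (dd x) (hddnn x); positivity
          calc p z * |1 / p z - 1 / p x| ≤ pP * (3 * Ci / Real.log (e + dd x)) :=
              mul_le_mul (hpleP z) hb1 (abs_nonneg _) hpppos.le
          _ ≤ (1 + pP) * (3 * Ci / Real.log (e + dd x)) := by linarith only [h3]
        have e3 : mB x r ^ (1 - s * p z) ≤ E2 := (hE2 x r hr hc _ e2).2
        have e4 : E2 ≤ AU ^ p z :=
          hAUpow z E2 hE2pos (le_trans (le_max_left _ _) (le_max_right _ _))
        have e5 : (AU ^ p z)⁻¹ * mB x r ^ (1 - s * p z) ≤ 1 := by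
          have i1 : (AU ^ p z)⁻¹ ≤ E2⁻¹ := by
            apply inv_anti₀ hE2pos e4
          calc (AU ^ p z)⁻¹ * mB x r ^ (1 - s * p z) ≤ E2⁻¹ * E2 :=
            mul_le_mul i1 e3 (Real.rpow_nonneg hmnn _) (by positivity)
          _ = 1 := inv_mul_cancel₀ hE2pos.ne'
        rw [hterm z]
        have : (AU ^ p z)⁻¹ * mB x r ^ (1 - s * p z) * (mB x r)⁻¹ ≤ 1 * (mB x r)⁻¹ :=
          mul_le_mul_of_nonneg_right e5 (inv_nonneg.mpr hmnn)
        rw [one_mul] at this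
        exact mul_le_mul_of_nonneg_right this (mu_nonneg G z)
      calc ∑ z ∈ (hfin x r).toFinset, ((AU * mB x r ^ s)⁻¹) ^ p z * G.mu z
          ≤ ∑ z ∈ (hfin x r).toFinset, (mB x r)⁻¹ * G.mu z := Finset.sum_le_sum hbound
      _ = (mB x r)⁻¹ * ∑ z ∈ (hfin x r).toFinset, G.mu z := by rw [Finset.mul_sum]
      _ ≤ 1 := le_of_eq (inv_mul_cancel₀ hm.ne')
    · -- large regime
      have hsval : s = a := by rw [hsdef, hsEdef]; simp only [if_neg hc]
      have hlarge : dd x < 2 * r := not_le.mp hc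
      have hm0 : m0' ≤ mB x r := hm₀le x r hr hlarge
      set M : ℝ := max (mB x r) e with hMdef
      have hMe : e ≤ M := le_max_right _ _
      have hM1 : (1:ℝ) ≤ Real.log M := by
        calc (1:ℝ) = Real.log e := (Real.log_exp 1).symm
        _ ≤ Real.log M := Real.log_le_log (Real.exp_pos 1) hMe
      have hMpos : (0:ℝ) < M := by linarith only [hMe, he2]
      set T : ℝ := M ^ ε with hTdef
      have hT1 : (1:ℝ) ≤ T := by
        calc (1:ℝ) = M ^ (0:ℝ) := (Real.rpow_zero M).symm
        _ ≤ M ^ ε := Real.rpow_le_rpow_of_exponent_le (by linarith only [hMe, he2]) hεpos.le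
      have hTpos : (0:ℝ) < T := by linarith only [hT1]
      have hlogT : Real.log T = ε * Real.log M := Real.log_rpow hMpos ε
      have hE34 : (0:ℝ) < E3 + E4 := by positivity
      have hE34AU : ∀ z : Γ, E3 + E4 ≤ AU ^ p z := fun z =>
        hAUpow z (E3 + E4) hE34 (le_trans (le_max_right _ _) (le_max_right _ _))
      have hlogm : |Real.log (mB x r)| ≤ |Real.log m0'| + Real.log M := by
        by_cases hm1 : 1 ≤ mB x r
        · rw [abs_of_nonneg (Real.log_nonneg hm1)]
          have : Real.log (mB x r) ≤ Real.log M :=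
            Real.log_le_log hm (le_max_left _ _)
          linarith only [abs_nonneg (Real.log m0'), this]
        · push_neg at hm1
          rw [abs_of_nonpos (Real.log_nonpos hmnn hm1.le)]
          have h1 : Real.log m0' ≤ Real.log (mB x r) := Real.log_le_log hm0'pos hm0
          have h2 : Real.log m0' ≤ 0 := Real.log_nonpos hm0'pos.le hm0'le1
          rw [abs_of_nonpos h2]
          linarith only [h1, hM1]
      -- split the sum
      rw [← Finset.sum_filter_add_sum_filter_not (hfin x r).toFinset
        (fun z => T ≤ e + dd z)]
      have hFb : ∑ z ∈ (hfin x r).toFinset.filter (fun z => T ≤ e + dd z),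
          ((AU * mB x r ^ s)⁻¹) ^ p z * G.mu z ≤ (E3 + E4)⁻¹ * E3 := by
        have hptb : ∀ z ∈ (hfin x r).toFinset.filter (fun z => T ≤ e + dd z),
            ((AU * mB x r ^ s)⁻¹) ^ p z * G.mu z
              ≤ (E3 + E4)⁻¹ * E3 * ((mB x r)⁻¹ * G.mu z) := by
          intro z hzf
          obtain ⟨hzB, hzT⟩ := Finset.mem_filter.mp hzf
          have hlogz : Ci / ε ≤ Ci / ε * 1 := by norm_num
          have hLz : ε * Real.log M ≤ Real.log (e + dd z) := by
            rw [← hlogT]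
            apply Real.log_le_log hTpos hzT
          have hLzpos : 0 < Real.log (e + dd z) := by
            have := hlog1 (dd z) (hddnn z); linarith only [this]
          have e2 : |1 - s * p z| ≤ pP * Ci / (ε * Real.log M) := by
            have e1 : 1 - s * p z = p z * (1 / p z - a) := by
              rw [hsval]
              first
              | (field_simp [((hppos z).ne')]; ring)
              | field_simp [((hppos z).ne')]
            rw [e1, abs_mul, abs_of_pos (hppos z)]
            have hd1 := hdec' z
            have step1 : p z * |1 / p z - a| ≤ pP * (Ci / Real.log (e + dd z)) :=
              mul_le_mul (hpleP z) hd1 (abs_nonneg _) hpppos.le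
            have step2 : Ci / Real.log (e + dd z) ≤ Ci / (ε * Real.log M) := by
              apply div_le_div_of_nonneg_left hCi.le (by positivity) hLz
            calc p z * |1 / p z - a| ≤ pP * (Ci / Real.log (e + dd z)) := step1
            _ ≤ pP * (Ci / (ε * Real.log M)) :=
                mul_le_mul_of_nonneg_left step2 hpppos.le
            _ = pP * Ci / (ε * Real.log M) := by ring
          have hKz : |1 - s * p z| * |Real.log (mB x r)| ≤
              pP * Ci / ε * (|Real.log m0'| + 1) := by
            have t1 : |1 - s * p z| * |Real.log (mB x r)| ≤
                (pP * Ci / (ε * Real.log M)) * (|Real.log m0'| + Real.log M) :=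
              mul_le_mul e2 hlogm (abs_nonneg _) (by positivity)
            have t2 : (pP * Ci / (ε * Real.log M)) * (|Real.log m0'| + Real.log M)
                = (pP * Ci / ε) * (|Real.log m0'| / Real.log M + 1) := by
              have hMne : Real.log M ≠ 0 := by linarith only [hM1]
              first
              | (field_simp; ring)
              | field_simp
            have t3 : |Real.log m0'| / Real.log M ≤ |Real.log m0'| := by
              apply div_le_self (abs_nonneg _) hM1
            have t4 : (pP * Ci / ε) * (|Real.log m0'| / Real.log M + 1)
                ≤ (pP * Ci / ε) * (|Real.log m0'| + 1) :=
              mul_le_mul_of_nonneg_left (by linarith only [t3])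
                (div_nonneg (mul_nonneg hpppos.le hCi.le) hεpos.le)
            calc |1 - s * p z| * |Real.log (mB x r)| ≤ _ := t1
            _ = _ := t2
            _ ≤ _ := t4
          have e3 : mB x r ^ (1 - s * p z) ≤ E3 := by
            rw [hE3def]
            exact (rpow_bounds hm hKz).2
          have e5 : (AU ^ p z)⁻¹ * mB x r ^ (1 - s * p z) ≤ (E3 + E4)⁻¹ * E3 := by
            have i1 : (AU ^ p z)⁻¹ ≤ (E3 + E4)⁻¹ :=
              inv_anti₀ hE34 (hE34AU z)
            exact mul_le_mul i1 e3 (Real.rpow_nonneg hmnn _) (by positivity)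
          rw [hterm z]
          calc (AU ^ p z)⁻¹ * mB x r ^ (1 - s * p z) * (mB x r)⁻¹ * G.mu z
              ≤ (E3 + E4)⁻¹ * E3 * (mB x r)⁻¹ * G.mu z := by
                apply mul_le_mul_of_nonneg_right _ (mu_nonneg G z)
                exact mul_le_mul_of_nonneg_right e5 (inv_nonneg.mpr hmnn)
          _ = (E3 + E4)⁻¹ * E3 * ((mB x r)⁻¹ * G.mu z) := by ring
        calc ∑ z ∈ (hfin x r).toFinset.filter (fun z => T ≤ e + dd z),
            ((AU * mB x r ^ s)⁻¹) ^ p z * G.mu z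
            ≤ ∑ z ∈ (hfin x r).toFinset.filter (fun z => T ≤ e + dd z),
              (E3 + E4)⁻¹ * E3 * ((mB x r)⁻¹ * G.mu z) := Finset.sum_le_sum hptb
        _ = (E3 + E4)⁻¹ * E3 * (mB x r)⁻¹ *
              (∑ z ∈ (hfin x r).toFinset.filter (fun z => T ≤ e + dd z), G.mu z) := by
            rw [Finset.mul_sum]
            exact Finset.sum_congr rfl (fun z _ => by ring)
        _ ≤ (E3 + E4)⁻¹ * E3 * (mB x r)⁻¹ * mB x r := by
            apply mul_le_mul_of_nonneg_left
              (Finset.sum_le_sum_of_subset_of_nonneg (Finset.filter_subset _ _)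
                (fun y _ _ => mu_nonneg G y))
              (mul_nonneg (mul_nonneg (inv_nonneg.mpr hE34.le) hE3pos.le)
                (inv_nonneg.mpr hmnn))
        _ = (E3 + E4)⁻¹ * E3 * ((mB x r)⁻¹ * mB x r) := by ring
        _ = (E3 + E4)⁻¹ * E3 := by rw [inv_mul_cancel₀ hm.ne', mul_one]
      have hSb : ∑ z ∈ (hfin x r).toFinset.filter (fun z => ¬ (T ≤ e + dd z)),
          ((AU * mB x r ^ s)⁻¹) ^ p z * G.mu z ≤ (E3 + E4)⁻¹ * E4 := by
        have htge1 : 1 ≤ AU * mB x r ^ s := by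
          rw [hsval]
          have k1 : m0' ^ (-a) ≤ AU := le_trans (le_max_right 1 _) (le_max_left _ _)
          have k2 : m0' ^ a ≤ mB x r ^ a := Real.rpow_le_rpow hm0'pos.le hm0 ha_pos.le
          calc (1:ℝ) = m0' ^ (-a) * m0' ^ a := by
                  rw [← Real.rpow_add hm0'pos]; norm_num
          _ ≤ AU * mB x r ^ a :=
              mul_le_mul k1 k2 (Real.rpow_nonneg hm0'pos.le _) hAUpos.le
        have hptb : ∀ z ∈ (hfin x r).toFinset.filter (fun z => ¬ (T ≤ e + dd z)),
            ((AU * mB x r ^ s)⁻¹) ^ p z * G.mu z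
              ≤ (E3 + E4)⁻¹ * mB x r ^ (-(a * pm)) * G.mu z := by
          intro z hzf
          apply mul_le_mul_of_nonneg_right _ (mu_nonneg G z)
          have j1 : ((AU * mB x r ^ s)⁻¹) ^ p z ≤ ((AU * mB x r ^ s)⁻¹) ^ pm := by
            apply Real.rpow_le_rpow_of_exponent_ge (by positivity)
              (inv_le_one_of_one_le₀ htge1) (hple z)
          have j2 : ((AU * mB x r ^ s)⁻¹) ^ pm = (AU ^ pm)⁻¹ * (mB x r ^ (s * pm))⁻¹ := by
            rw [mul_inv, Real.mul_rpow (inv_nonneg.mpr hAUpos.le)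
              (inv_nonneg.mpr (Real.rpow_nonneg hmnn s)),
              Real.inv_rpow hAUpos.le, Real.inv_rpow (Real.rpow_nonneg hmnn s),
              ← Real.rpow_mul hmnn]
          have j3 : (AU ^ pm)⁻¹ ≤ (E3 + E4)⁻¹ := by
            apply inv_anti₀ hE34
            have i1 : (E3 + E4) = ((E3 + E4) ^ (1/pm)) ^ pm := by
              rw [← Real.rpow_mul hE34.le, one_div, inv_mul_cancel₀ hpm.ne',
                Real.rpow_one]
            rw [i1]
            exact Real.rpow_le_rpow (Real.rpow_nonneg hE34.le _)
              (le_trans (le_max_right _ _) (le_max_right _ _)) hpm.le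
          have j4 : (mB x r ^ (s * pm))⁻¹ = mB x r ^ (-(a * pm)) := by
            rw [hsval, ← Real.rpow_neg hmnn]
          calc ((AU * mB x r ^ s)⁻¹) ^ p z ≤ ((AU * mB x r ^ s)⁻¹) ^ pm := j1
          _ = (AU ^ pm)⁻¹ * (mB x r ^ (s * pm))⁻¹ := j2
          _ ≤ (E3 + E4)⁻¹ * (mB x r ^ (s * pm))⁻¹ :=
              mul_le_mul_of_nonneg_right j3 (inv_nonneg.mpr (Real.rpow_nonneg hmnn _))
          _ = (E3 + E4)⁻¹ * mB x r ^ (-(a * pm)) := by rw [j4]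
        have hsubS : ∑ z ∈ (hfin x r).toFinset.filter (fun z => ¬ (T ≤ e + dd z)), G.mu z
            ≤ CD * T ^ D * μ₀ := by
          have hsubset : (hfin x r).toFinset.filter (fun z => ¬ (T ≤ e + dd z))
              ⊆ (hfin x₀ T).toFinset := by
            intro z hz
            obtain ⟨-, hzT⟩ := Finset.mem_filter.mp hz
            push_neg at hzT
            apply hmem.mpr
            show ((G.dist x₀ z : ℕ) : ℝ) < T
            rw [dist_comm']
            have he0' : (0:ℝ) < e := by linarith only [he2]
            have hdz : ((G.dist z x₀ : ℕ) : ℝ) = dd z := rfl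
            rw [hdz]
            linarith only [hzT, he0']
          calc ∑ z ∈ (hfin x r).toFinset.filter (fun z => ¬ (T ≤ e + dd z)), G.mu z
              ≤ ∑ z ∈ (hfin x₀ T).toFinset, G.mu z :=
              Finset.sum_le_sum_of_subset_of_nonneg hsubset (fun y _ _ => mu_nonneg G y)
          _ ≤ CD * (T / 1) ^ D * mB x₀ 1 := hdblR x₀ T 1 one_pos hT1
          _ = CD * T ^ D * μ₀ := by rw [div_one, hmu1 x₀]
        have hclaim : mB x r ^ (-(a * pm)) * (CD * T ^ D * μ₀) ≤ E4 := by
          have he0 : (0:ℝ) < e := by linarith only [he2]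
          have hTD : T ^ D = M ^ (a * pm / 2) := by
            rw [hTdef, ← Real.rpow_mul hMpos.le, hεD]
          rw [hTD]
          by_cases hme : e ≤ mB x r
          · have hMm : M = mB x r := max_eq_left hme
            rw [hMm]
            have c1 : mB x r ^ (-(a * pm)) * mB x r ^ (a * pm / 2)
                = mB x r ^ (-(a * pm / 2)) := by
              rw [← Real.rpow_add hm]
              congr 1
              ring
            have c2 : mB x r ^ (-(a * pm / 2)) ≤ 1 :=
              Real.rpow_le_one_of_one_le_of_nonpos (by linarith only [hme, he2])
                (neg_nonpos.mpr (by positivity))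
            calc mB x r ^ (-(a * pm)) * (CD * mB x r ^ (a * pm / 2) * μ₀)
                = CD * μ₀ * (mB x r ^ (-(a * pm)) * mB x r ^ (a * pm / 2)) := by ring
            _ = CD * μ₀ * mB x r ^ (-(a * pm / 2)) := by rw [c1]
            _ ≤ CD * μ₀ * 1 := mul_le_mul_of_nonneg_left c2 (by positivity)
            _ ≤ E4 := by
                rw [hE4def]
                have hintB : (0:ℝ) ≤ CD * μ₀ * e * (m0' ^ (-(a * pm))) :=
                  mul_nonneg (mul_nonneg (mul_nonneg hCDpos.le hμ₀.le) he0.le)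
                    (Real.rpow_nonneg hm0'pos.le _)
                have hintA : (0:ℝ) ≤ CD * μ₀ * (e - 1) :=
                  mul_nonneg (mul_nonneg hCDpos.le hμ₀.le) (by linarith only [he2])
                linarith only [hintA, hintB]
          · push_neg at hme
            have hMm : M = e := max_eq_right hme.le
            rw [hMm]
            have c3 : e ^ (a * pm / 2) ≤ e := by
              have hapm2 : a * pm / 2 ≤ 1 := by linarith only [hapm]
              calc e ^ (a * pm / 2) ≤ e ^ (1:ℝ) :=
                  Real.rpow_le_rpow_of_exponent_le (by linarith only [he2]) hapm2
              _ = e := Real.rpow_one e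
            have c4 : mB x r ^ (-(a * pm)) ≤ m0' ^ (-(a * pm)) := by
              rw [Real.rpow_neg hmnn, Real.rpow_neg hm0'pos.le]
              apply inv_anti₀ (Real.rpow_pos_of_pos hm0'pos _)
              exact Real.rpow_le_rpow hm0'pos.le hm0 (by positivity)
            have c5 : mB x r ^ (-(a * pm)) * (CD * e ^ (a * pm / 2) * μ₀)
                ≤ m0' ^ (-(a * pm)) * (CD * e * μ₀) := by
              apply mul_le_mul c4 _ _ (Real.rpow_nonneg hm0'pos.le _)
              · exact mul_le_mul_of_nonneg_right
                  (mul_le_mul_of_nonneg_left c3 hCDpos.le) hμ₀.le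
              · have : (0:ℝ) ≤ e ^ (a * pm / 2) := Real.rpow_nonneg he0.le _
                positivity
            calc mB x r ^ (-(a * pm)) * (CD * e ^ (a * pm / 2) * μ₀)
                ≤ m0' ^ (-(a * pm)) * (CD * e * μ₀) := c5
            _ ≤ E4 := by
                rw [hE4def]
                linarith only [mul_pos (mul_pos hCDpos hμ₀) he0]
        calc ∑ z ∈ (hfin x r).toFinset.filter (fun z => ¬ (T ≤ e + dd z)),
            ((AU * mB x r ^ s)⁻¹) ^ p z * G.mu z
            ≤ ∑ z ∈ (hfin x r).toFinset.filter (fun z => ¬ (T ≤ e + dd z)),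
              (E3 + E4)⁻¹ * mB x r ^ (-(a * pm)) * G.mu z := Finset.sum_le_sum hptb
        _ = (E3 + E4)⁻¹ * (mB x r ^ (-(a * pm)) *
              ∑ z ∈ (hfin x r).toFinset.filter (fun z => ¬ (T ≤ e + dd z)), G.mu z) := by
            rw [Finset.mul_sum, Finset.mul_sum]
            exact Finset.sum_congr rfl (fun z _ => by ring)
        _ ≤ (E3 + E4)⁻¹ * E4 := by
            apply mul_le_mul_of_nonneg_left _ (inv_nonneg.mpr hE34.le)
            calc mB x r ^ (-(a * pm)) *
                ∑ z ∈ (hfin x r).toFinset.filter (fun z => ¬ (T ≤ e + dd z)), G.mu z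
                ≤ mB x r ^ (-(a * pm)) * (CD * T ^ D * μ₀) :=
                mul_le_mul_of_nonneg_left hsubS (Real.rpow_nonneg hmnn _)
            _ ≤ E4 := hclaim
      calc (∑ z ∈ (hfin x r).toFinset.filter (fun z => T ≤ e + dd z),
            ((AU * mB x r ^ s)⁻¹) ^ p z * G.mu z)
          + ∑ z ∈ (hfin x r).toFinset.filter (fun z => ¬ (T ≤ e + dd z)),
            ((AU * mB x r ^ s)⁻¹) ^ p z * G.mu z
          ≤ (E3 + E4)⁻¹ * E3 + (E3 + E4)⁻¹ * E4 := add_le_add hFb hSb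
      _ = 1 := by
          rw [← mul_add]
          exact inv_mul_cancel₀ hE34.ne'

  -- lower bound for the norm
  have HL : ∀ (x : Γ) (r : ℝ), 0 < r →
      ENNReal.ofReal (mB x r ^ sE x r / AL) ≤ G.vnorm p (indE (G.ball x r)) := by
    intro x r hr
    have hm := hmBpos x r hr
    have hmnn := hmBnn x r
    set s := sE x r with hsdef
    apply le_vnorm_char G p hppos (hfin x r)
    intro t ht hρ
    have hext : ∀ F : Finset Γ, F ⊆ (hfin x r).toFinset → 0 < (∑ z ∈ F, G.mu z) →
        ∃ z ∈ F, ∑ z' ∈ F, G.mu z' ≤ t ^ p z := by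
      intro F hF hFpos
      have hρF : ∑ z ∈ F, t⁻¹ ^ p z * G.mu z ≤ 1 := by
        refine le_trans (Finset.sum_le_sum_of_subset_of_nonneg hF ?_) hρ
        intro y _ _
        exact mul_nonneg (Real.rpow_nonneg (inv_nonneg.mpr ht.le) _) (mu_nonneg G y)
      obtain ⟨z, hz, hzle⟩ := exists_mul_sum_le (fun y _ => mu_nonneg G y) hFpos hρF
      refine ⟨z, hz, ?_⟩
      have hinv : t⁻¹ ^ p z = (t ^ p z)⁻¹ := Real.inv_rpow ht.le _
      rw [hinv, inv_mul_le_iff₀ (Real.rpow_pos_of_pos ht _), mul_one] at hzle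
      exact hzle
    have hroot : ∀ (z : Γ) (X : ℝ), 0 ≤ X → X ≤ t ^ p z → X ^ (1 / p z) ≤ t := by
      intro z X hX h
      have h2 : X ^ (1 / p z) ≤ (t ^ p z) ^ (1 / p z) :=
        Real.rpow_le_rpow hX h (one_div_nonneg.mpr (hppos z).le)
      have h3 : (t ^ p z) ^ (1 / p z) = t := by
        rw [← Real.rpow_mul ht.le, mul_one_div, div_self (hppos z).ne', Real.rpow_one]
      rw [h3] at h2
      exact h2
    by_cases hc : 2 * r ≤ dd x
    · -- small regime
      have hsval : s = 1 / p x := by rw [hsdef, hsEdef]; simp only [if_pos hc]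
      obtain ⟨z, hzf, hzle⟩ := hext (hfin x r).toFinset (subset_refl _) hm
      have hz : z ∈ G.ball x r := hmem.mp hzf
      have h1 : mB x r ^ (1 / p z) ≤ t := hroot z (mB x r) hmnn hzle
      have e2 : |1 / p z - 1 / p x| ≤ (1 + pP) * (3 * Ci / Real.log (e + dd x)) := by
        have hb1 := hS2 x r z hr hc hz
        have h3 : (0:ℝ) ≤ 3 * Ci / Real.log (e + dd x) := by
          have := hlog1 (dd x) (hddnn x); positivity
        nlinarith only [hb1, h3, hpppos]
      have e3 : E2⁻¹ ≤ mB x r ^ (1 / p z - 1 / p x) := (hE2 x r hr hc _ e2).1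
      have e4 : mB x r ^ (1 / p z) = mB x r ^ (1 / p x) * mB x r ^ (1 / p z - 1 / p x) := by
        rw [← Real.rpow_add hm]; congr 1; ring
      have e5 : mB x r ^ (1 / p x) * E2⁻¹ ≤ mB x r ^ (1 / p z) := by
        rw [e4]
        exact mul_le_mul_of_nonneg_left e3 (Real.rpow_nonneg hmnn _)
      rw [hsval]
      have hALE2 : E2 ≤ AL := le_max_left _ _
      calc mB x r ^ (1 / p x) / AL ≤ mB x r ^ (1 / p x) / E2 :=
          div_le_div_of_nonneg_left (Real.rpow_nonneg hmnn _) hE2pos hALE2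
      _ = mB x r ^ (1 / p x) * E2⁻¹ := div_eq_mul_inv _ _
      _ ≤ mB x r ^ (1 / p z) := e5
      _ ≤ t := h1
    · -- large regime
      have hsval : s = a := by rw [hsdef, hsEdef]; simp only [if_neg hc]
      rw [hsval]
      have hlarge : dd x < 2 * r := not_le.mp hc
      have hm0 : m0' ≤ mB x r := hm₀le x r hr hlarge
      by_cases hMc : mB x r ≤ M₀
      · -- moderate mass case
        obtain ⟨z, hzf, hzle⟩ := hext (hfin x r).toFinset (subset_refl _) hm
        have h1 : mB x r ^ (1 / p z) ≤ t := hroot z (mB x r) hmnn hzle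
        have hc7t : c7 ≤ t := by
          by_cases hm1 : 1 ≤ mB x r
          · have i0 : mB x r ^ (0:ℝ) ≤ mB x r ^ (1 / p z) :=
              Real.rpow_le_rpow_of_exponent_le hm1 (one_div_nonneg.mpr (hppos z).le)
            rw [Real.rpow_zero] at i0
            linarith only [i0, h1, hc7le1]
          · push_neg at hm1
            have i1 : mB x r ^ (1 / pm) ≤ mB x r ^ (1 / p z) :=
              Real.rpow_le_rpow_of_exponent_ge hm hm1.le
                (one_div_le_one_div_of_le hpm (hple z))
            have i2 : m0' ^ (1 / pm) ≤ mB x r ^ (1 / pm) :=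
              Real.rpow_le_rpow hm0'pos.le hm0 (one_div_nonneg.mpr hpm.le)
            calc c7 = m0' ^ (1 / pm) := hc7def
            _ ≤ mB x r ^ (1 / pm) := i2
            _ ≤ mB x r ^ (1 / p z) := i1
            _ ≤ t := h1
        have k1 : 1 / AL ≤ c7 * M₀ ^ (-a) := le_trans hALc8 (min_le_left _ _)
        have k2 : mB x r ^ a ≤ M₀ ^ a := Real.rpow_le_rpow hmnn hMc ha_pos.le
        have k3 : mB x r ^ a / AL ≤ c7 * M₀ ^ (-a) * M₀ ^ a := by
          rw [div_eq_mul_one_div]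
          calc mB x r ^ a * (1 / AL) ≤ M₀ ^ a * (c7 * M₀ ^ (-a)) := by
                  apply mul_le_mul k2 k1 (by positivity) (Real.rpow_nonneg hM₀pos.le _)
          _ = c7 * M₀ ^ (-a) * M₀ ^ a := by ring
        have k4 : M₀ ^ (-a) * M₀ ^ a = 1 := by
          rw [← Real.rpow_add hM₀pos]; norm_num
        calc mB x r ^ a / AL ≤ c7 * M₀ ^ (-a) * M₀ ^ a := k3
        _ = c7 := by rw [mul_assoc, k4, mul_one]
        _ ≤ t := hc7t
      · -- large mass case
        push_neg at hMc
        have hme : e ≤ mB x r := le_trans hM₀e hMc.le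
        have hm1 : (1:ℝ) ≤ mB x r := by linarith only [hme, he2]
        set T : ℝ := mB x r ^ ε with hTdef
        have hT1 : (1:ℝ) ≤ T := by
          have i0 : mB x r ^ (0:ℝ) ≤ mB x r ^ ε :=
            Real.rpow_le_rpow_of_exponent_le hm1 hεpos.le
          rw [Real.rpow_zero] at i0
          exact i0
        have hTpos : (0:ℝ) < T := by linarith only [hT1]
        have hsqh : mB x r ^ ((1:ℝ)/2) * mB x r ^ ((1:ℝ)/2) = mB x r := by
          rw [← Real.rpow_add hm]; norm_num
        have hrtnn : (0:ℝ) ≤ mB x r ^ ((1:ℝ)/2) := Real.rpow_nonneg hmnn _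
        have q1 : (max 1 (2 * CD * μ₀)) ^ 2 ≤ mB x r := le_trans (le_max_right e _) hMc.le
        have q2 : max 1 (2 * CD * μ₀) ≤ mB x r ^ ((1:ℝ)/2) := by
          have hXnn : (0:ℝ) ≤ max 1 (2 * CD * μ₀) := by positivity
          nlinarith only [q1, hsqh, hXnn, hrtnn,
            sq_nonneg (max 1 (2 * CD * μ₀) - mB x r ^ ((1:ℝ)/2)),
            sq_nonneg (max 1 (2 * CD * μ₀) + mB x r ^ ((1:ℝ)/2))]
        have q4 : 2 * CD * μ₀ ≤ mB x r ^ ((1:ℝ)/2) := le_trans (le_max_right 1 _) q2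
        have hcompl : ∑ z ∈ (hfin x r).toFinset.filter (fun z => ¬ (T ≤ e + dd z)), G.mu z
            ≤ mB x r / 2 := by
          have hsubset : (hfin x r).toFinset.filter (fun z => ¬ (T ≤ e + dd z))
              ⊆ (hfin x₀ T).toFinset := by
            intro z hz
            obtain ⟨-, hzT⟩ := Finset.mem_filter.mp hz
            push_neg at hzT
            apply hmem.mpr
            show ((G.dist x₀ z : ℕ) : ℝ) < T
            rw [dist_comm']
            have he0 : (0:ℝ) < e := by linarith only [he2]
            have hdz : ((G.dist z x₀ : ℕ) : ℝ) = dd z := rfl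
            rw [hdz]
            linarith only [hzT, he0]
          have step1 : ∑ z ∈ (hfin x r).toFinset.filter (fun z => ¬ (T ≤ e + dd z)), G.mu z
              ≤ CD * T ^ D * μ₀ := by
            calc ∑ z ∈ (hfin x r).toFinset.filter (fun z => ¬ (T ≤ e + dd z)), G.mu z
                ≤ ∑ z ∈ (hfin x₀ T).toFinset, G.mu z :=
                Finset.sum_le_sum_of_subset_of_nonneg hsubset (fun y _ _ => mu_nonneg G y)
            _ ≤ CD * (T / 1) ^ D * mB x₀ 1 := hdblR x₀ T 1 one_pos hT1
            _ = CD * T ^ D * μ₀ := by rw [div_one, hmu1 x₀]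
          have step2 : T ^ D = mB x r ^ (a * pm / 2) := by
            rw [hTdef, ← Real.rpow_mul hmnn, hεD]
          have step3 : mB x r ^ (a * pm / 2) ≤ mB x r ^ ((1:ℝ)/2) := by
            apply Real.rpow_le_rpow_of_exponent_le hm1
            linarith only [hapm]
          calc ∑ z ∈ (hfin x r).toFinset.filter (fun z => ¬ (T ≤ e + dd z)), G.mu z
              ≤ CD * T ^ D * μ₀ := step1
          _ = CD * mB x r ^ (a * pm / 2) * μ₀ := by rw [step2]
          _ ≤ CD * mB x r ^ ((1:ℝ)/2) * μ₀ := by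
              apply mul_le_mul_of_nonneg_right
                (mul_le_mul_of_nonneg_left step3 hCDpos.le) hμ₀.le
          _ ≤ mB x r / 2 := by
              linarith only [mul_nonneg hrtnn (sub_nonneg.mpr q4), hsqh]
        set F : Finset Γ := (hfin x r).toFinset.filter (fun z => T ≤ e + dd z) with hFdef
        have htot : ∑ z ∈ (hfin x r).toFinset, G.mu z = mB x r := rfl
        have hsplit := Finset.sum_filter_add_sum_filter_not (hfin x r).toFinset
          (fun z => T ≤ e + dd z) G.mu
        have hFge : mB x r / 2 ≤ ∑ z ∈ F, G.mu z := by
          rw [htot] at hsplit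
          rw [hFdef]
          linarith only [hsplit, hcompl]
        have hFpos : 0 < ∑ z ∈ F, G.mu z := by linarith only [hFge, hme, he2]
        obtain ⟨z, hzF, hzle⟩ := hext F (Finset.filter_subset _ _) hFpos
        have hzT : T ≤ e + dd z := (Finset.mem_filter.mp hzF).2
        have hm2 : mB x r / 2 ≤ t ^ p z := le_trans hFge hzle
        have hm2pos : (0:ℝ) < mB x r / 2 := by linarith only [hme, he2]
        have hm21 : (1:ℝ) ≤ mB x r / 2 := by linarith only [hme, he2]
        have h1 : (mB x r / 2) ^ (1 / p z) ≤ t := hroot z _ hm2pos.le hm2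
        have hlogm_pos : 0 < Real.log (mB x r) := Real.log_pos (by linarith only [hme, he2])
        have hLz : ε * Real.log (mB x r) ≤ Real.log (e + dd z) := by
          have i1 : Real.log T = ε * Real.log (mB x r) := Real.log_rpow hm ε
          rw [← i1]
          exact Real.log_le_log hTpos hzT
        have hu2 : |1 / p z - a| * |Real.log (mB x r / 2)| ≤ Ci / ε := by
          have d1 := hdec' z
          have d2 : |Real.log (mB x r / 2)| ≤ Real.log (mB x r) := by
            rw [abs_of_nonneg (Real.log_nonneg hm21)]
            exact Real.log_le_log hm2pos (by linarith only [hm2pos])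
          have d3 : |1 / p z - a| ≤ Ci / (ε * Real.log (mB x r)) := by
            refine d1.trans ?_
            exact div_le_div_of_nonneg_left hCi.le (by positivity) hLz
          calc |1 / p z - a| * |Real.log (mB x r / 2)|
              ≤ (Ci / (ε * Real.log (mB x r))) * Real.log (mB x r) :=
              mul_le_mul d3 d2 (abs_nonneg _) (by positivity)
          _ = Ci / ε := by
              first
              | (field_simp [hεpos.ne', hlogm_pos.ne']; ring)
              | field_simp [hεpos.ne', hlogm_pos.ne']
        have e3 : Real.exp (-(Ci / ε)) ≤ (mB x r / 2) ^ (1 / p z - a) :=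
          (rpow_bounds hm2pos hu2).1
        have e4 : (mB x r / 2) ^ (1 / p z)
            = (mB x r / 2) ^ a * (mB x r / 2) ^ (1 / p z - a) := by
          rw [← Real.rpow_add hm2pos]; congr 1; ring
        have e5 : (mB x r / 2) ^ a * Real.exp (-(Ci / ε)) ≤ (mB x r / 2) ^ (1 / p z) := by
          rw [e4]
          exact mul_le_mul_of_nonneg_left e3 (Real.rpow_nonneg hm2pos.le _)
        have e6 : (mB x r / 2) ^ a = mB x r ^ a * (2:ℝ) ^ (-a) := by
          rw [Real.div_rpow hmnn (by norm_num : (0:ℝ) ≤ 2),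
            Real.rpow_neg (by norm_num : (0:ℝ) ≤ 2), div_eq_mul_inv]
        have k1 : 1 / AL ≤ (2:ℝ) ^ (-a) * Real.exp (-(Ci / ε)) :=
          le_trans hALc8 (min_le_right _ _)
        calc mB x r ^ a / AL = mB x r ^ a * (1 / AL) := div_eq_mul_one_div _ _
        _ ≤ mB x r ^ a * ((2:ℝ) ^ (-a) * Real.exp (-(Ci / ε))) :=
            mul_le_mul_of_nonneg_left k1 (Real.rpow_nonneg hmnn _)
        _ = (mB x r / 2) ^ a * Real.exp (-(Ci / ε)) := by rw [e6]; ring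
        _ ≤ (mB x r / 2) ^ (1 / p z) := e5
        _ ≤ t := h1

  -- final assembly
  refine ⟨AU * AL * E5, by positivity, ?_⟩
  intro x β r hβ hr
  have hβr : 0 < β * r := by positivity
  have key : mB x (β * r) ^ sE x (β * r) ≤ E5 * β ^ (D / w) * mB x r ^ sE x r := by
    have hm := hmBpos x r hr
    have hmnn := hmBnn x r
    have hβ0 : (0:ℝ) < β := lt_trans one_pos hβ
    have hrle : r ≤ β * r := by linarith only [mul_pos (sub_pos.mpr hβ) hr]
    have hdm : mB x (β * r) ≤ CD * β ^ D * mB x r := by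
      have h0 := hdblR x (β * r) r hr hrle
      have hq : (β * r) / r = β := by field_simp
      rwa [hq] at h0
    have hβD1 : (1:ℝ) ≤ β ^ D := by
      have i0 : β ^ (0:ℝ) ≤ β ^ D := Real.rpow_le_rpow_of_exponent_le hβ.le hD.le
      rwa [Real.rpow_zero] at i0
    have hβDnn : (0:ℝ) ≤ β ^ (D / w) := Real.rpow_nonneg hβ0.le _
    have hCb1 : (1:ℝ) ≤ CD * β ^ D := by nlinarith only [hCD1, hβD1]
    have hgen : ∀ u : ℝ, 0 < u → u ≤ 1 / pm →
        (CD * β ^ D) ^ u ≤ CD ^ (1 / pm) * β ^ (D / w) := by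
      intro u hu hupm
      have g1 : (CD * β ^ D) ^ u ≤ (CD * β ^ D) ^ (1 / pm) :=
        Real.rpow_le_rpow_of_exponent_le hCb1 hupm
      have g2 : (CD * β ^ D) ^ (1 / pm) = CD ^ (1 / pm) * (β ^ D) ^ (1 / pm) :=
        Real.mul_rpow hCDpos.le (by positivity)
      have g3 : (β ^ D) ^ (1 / pm) = β ^ (D / pm) := by
        rw [← Real.rpow_mul hβ0.le, mul_one_div]
      have g4 : β ^ (D / pm) ≤ β ^ (D / w) := by
        apply Real.rpow_le_rpow_of_exponent_le hβ.le
        exact div_le_div_of_nonneg_left hD.le hw0 hw.le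
      calc (CD * β ^ D) ^ u ≤ (CD * β ^ D) ^ (1 / pm) := g1
      _ = CD ^ (1 / pm) * (β ^ D) ^ (1 / pm) := g2
      _ = CD ^ (1 / pm) * β ^ (D / pm) := by rw [g3]
      _ ≤ CD ^ (1 / pm) * β ^ (D / w) :=
          mul_le_mul_of_nonneg_left g4 (Real.rpow_nonneg hCDpos.le _)
    have hmm : ∀ u : ℝ, 0 ≤ u → mB x (β * r) ^ u ≤ (CD * β ^ D) ^ u * mB x r ^ u := by
      intro u hu
      calc mB x (β * r) ^ u ≤ (CD * β ^ D * mB x r) ^ u :=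
          Real.rpow_le_rpow (hmBnn x (β * r)) hdm hu
      _ = (CD * β ^ D) ^ u * mB x r ^ u := Real.mul_rpow (by linarith only [hCb1]) hmnn
    have hnn1 : (0:ℝ) ≤ CD ^ (1 / pm) := Real.rpow_nonneg hCDpos.le _
    by_cases hc' : 2 * (β * r) ≤ dd x
    · -- both balls in the small regime
      have hc : 2 * r ≤ dd x := by linarith only [hc', hrle]
      have hs' : sE x (β * r) = 1 / p x := by rw [hsEdef]; simp only [if_pos hc']
      have hs : sE x r = 1 / p x := by rw [hsEdef]; simp only [if_pos hc]
      rw [hs', hs]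
      have hu : 0 < 1 / p x := one_div_pos.mpr (hppos x)
      have hupm : 1 / p x ≤ 1 / pm := one_div_le_one_div_of_le hpm (hple x)
      calc mB x (β * r) ^ (1 / p x)
          ≤ (CD * β ^ D) ^ (1 / p x) * mB x r ^ (1 / p x) := hmm _ hu.le
      _ ≤ (CD ^ (1 / pm) * β ^ (D / w)) * mB x r ^ (1 / p x) :=
          mul_le_mul_of_nonneg_right (hgen _ hu hupm) (Real.rpow_nonneg hmnn _)
      _ ≤ (CD ^ (1 / pm) * β ^ (D / w)) * mB x r ^ (1 / p x) * E2 :=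
          le_mul_of_one_le_right
            (mul_nonneg (mul_nonneg hnn1 hβDnn) (Real.rpow_nonneg hmnn _)) hE2one
      _ = E5 * β ^ (D / w) * mB x r ^ (1 / p x) := by rw [hE5def]; ring
    · -- the dilated ball is in the large regime
      have hs' : sE x (β * r) = a := by rw [hsEdef]; simp only [if_neg hc']
      rw [hs']
      have step : mB x (β * r) ^ a ≤ (CD ^ (1 / pm) * β ^ (D / w)) * mB x r ^ a := by
        calc mB x (β * r) ^ a ≤ (CD * β ^ D) ^ a * mB x r ^ a := hmm a ha_pos.le
        _ ≤ _ := mul_le_mul_of_nonneg_right (hgen a ha_pos ha_le)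
            (Real.rpow_nonneg hmnn _)
      by_cases hc : 2 * r ≤ dd x
      · -- the small ball is in the small regime
        have hs : sE x r = 1 / p x := by rw [hsEdef]; simp only [if_pos hc]
        rw [hs]
        have e1 : mB x r ^ a = mB x r ^ (1 / p x) * mB x r ^ (a - 1 / p x) := by
          rw [← Real.rpow_add hm]; congr 1; ring
        have e2 : |a - 1 / p x| ≤ (1 + pP) * (3 * Ci / Real.log (e + dd x)) := by
          have hd1 := hdec' x
          have h3 : (0:ℝ) ≤ Ci / Real.log (e + dd x) := by
            have := hlog1 (dd x) (hddnn x); positivity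
          have habs : |a - 1 / p x| = |1 / p x - a| := abs_sub_comm _ _
          rw [habs]
          have h5 : (1:ℝ) ≤ (1 + pP) * 3 := by linarith only [hpppos]
          refine hd1.trans ?_
          calc Ci / Real.log (e + dd x) = 1 * (Ci / Real.log (e + dd x)) :=
              (one_mul _).symm
          _ ≤ ((1 + pP) * 3) * (Ci / Real.log (e + dd x)) :=
              mul_le_mul_of_nonneg_right h5 h3
          _ = (1 + pP) * (3 * Ci / Real.log (e + dd x)) := by ring
        have e3 : mB x r ^ (a - 1 / p x) ≤ E2 := (hE2 x r hr hc _ e2).2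
        calc mB x (β * r) ^ a ≤ (CD ^ (1 / pm) * β ^ (D / w)) * mB x r ^ a := step
        _ = (CD ^ (1 / pm) * β ^ (D / w)) *
              (mB x r ^ (1 / p x) * mB x r ^ (a - 1 / p x)) := by rw [← e1]
        _ ≤ (CD ^ (1 / pm) * β ^ (D / w)) * (mB x r ^ (1 / p x) * E2) := by
            apply mul_le_mul_of_nonneg_left _ (mul_nonneg hnn1 hβDnn)
            exact mul_le_mul_of_nonneg_left e3 (Real.rpow_nonneg hmnn _)
        _ = E5 * β ^ (D / w) * mB x r ^ (1 / p x) := by rw [hE5def]; ring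
      · -- both balls in the large regime
        have hs : sE x r = a := by rw [hsEdef]; simp only [if_neg hc]
        rw [hs]
        calc mB x (β * r) ^ a ≤ (CD ^ (1 / pm) * β ^ (D / w)) * mB x r ^ a := step
        _ ≤ (CD ^ (1 / pm) * β ^ (D / w)) * mB x r ^ a * E2 :=
            le_mul_of_one_le_right
              (mul_nonneg (mul_nonneg hnn1 hβDnn) (Real.rpow_nonneg hmnn _)) hE2one
        _ = E5 * β ^ (D / w) * mB x r ^ a := by rw [hE5def]; ring

  calc G.vnorm p (indE (G.ball x (β * r))) ≤
      ENNReal.ofReal (AU * mB x (β * r) ^ sE x (β * r)) := HU x (β * r) hβr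
  _ ≤ ENNReal.ofReal (AU * (E5 * β ^ (D / w) * mB x r ^ sE x r)) := by
      apply ENNReal.ofReal_le_ofReal
      exact mul_le_mul_of_nonneg_left key hAUpos.le
  _ = ENNReal.ofReal ((AU * AL * E5) * β ^ (D / w) * (mB x r ^ sE x r / AL)) := by
      congr 1
      field_simp
  _ = ENNReal.ofReal ((AU * AL * E5) * β ^ (D / w)) *
        ENNReal.ofReal (mB x r ^ sE x r / AL) := by
      rw [← ENNReal.ofReal_mul (by positivity)]
  _ ≤ ENNReal.ofReal ((AU * AL * E5) * β ^ (D / w)) * G.vnorm p (indE (G.ball x r)) :=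
      mul_le_mul_right (HL x r hr) _


end VarHardy
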